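/- For every t ∈ ℝ, the Bessel functions of integer order satisfy Σ_{n=1}^∞ n^2 · J_n(t)^2 = t^2/4. -/

import Mathlib

/-- The Bessel function of the first kind of nonnegative integer order `n`,
`J_n(t) = Σ_{m=0}^∞ (−1)^m (t/2)^{n+2m} / (m!(n+m)!)`. -/
noncomputable def besselJ (n : ℕ) (t : ℝ) : ℝ :=
  ∑' m : ℕ, (-1 : ℝ) ^ m * (t / 2) ^ (n + 2 * m) /
    ((Nat.factorial m : ℝ) * (Nat.factorial (n + m) : ℝ))

namespace BesselAux

lemma cexp_tsum (x : ℂ) : Complex.exp x = ∑' n : ℕ, x ^ n / (Nat.factorial n : ℂ) := by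
  rw [Complex.exp_eq_exp_ℂ]
  exact congrFun (NormedSpace.exp_eq_tsum_div (𝔸 := ℂ)) x

open Complex Real MeasureTheory ContinuousMap intervalIntegral

noncomputable def A (n m : ℕ) (t : ℝ) : ℝ :=
  (-1 : ℝ) ^ m * (t / 2) ^ (n + 2 * m) / ((Nat.factorial m : ℝ) * (Nat.factorial (n + m) : ℝ))

lemma besselJ_eq (n : ℕ) (t : ℝ) : besselJ n t = ∑' m, A n m t := rfl

lemma summable_A (n : ℕ) (t : ℝ) : Summable fun m => A n m t := by
  apply Summable.of_norm_bounded (g := fun m => |t / 2| ^ n * ((|t / 2| ^ 2) ^ m / Nat.factorial m))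
    ((Real.summable_pow_div_factorial (|t / 2| ^ 2)).mul_left _)
  intro m
  have h1 : (0:ℝ) < Nat.factorial m := by exact_mod_cast (Nat.factorial_pos m)
  have h2 : (1:ℝ) ≤ Nat.factorial (n + m) := by exact_mod_cast (Nat.one_le_iff_ne_zero.mpr (Nat.factorial_pos (n+m)).ne')
  calc ‖A n m t‖ = |t / 2| ^ (n + 2 * m) / ((Nat.factorial m : ℝ) * (Nat.factorial (n + m) : ℝ)) := by
        simp [A, abs_div, abs_mul, abs_pow]
    _ ≤ |t / 2| ^ (n + 2 * m) / ((Nat.factorial m : ℝ) * 1) := by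
        gcongr
    _ = |t / 2| ^ n * ((|t / 2| ^ 2) ^ m / Nat.factorial m) := by
        rw [pow_add, pow_mul]; ring

lemma hasSum_A (n : ℕ) (t : ℝ) : HasSum (fun m => A n m t) (besselJ n t) :=
  (summable_A n t).hasSum

lemma bessel_rec (n : ℕ) (t : ℝ) :
    t / 2 * (besselJ n t + besselJ (n + 2) t) = ((n : ℝ) + 1) * besselJ (n + 1) t := by
  have h1 : HasSum (fun m => t / 2 * A n m t) (t / 2 * besselJ n t) :=
    (hasSum_A n t).mul_left _
  have h2 : HasSum (fun m => t / 2 * A (n + 2) m t) (t / 2 * besselJ (n + 2) t) :=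
    (hasSum_A (n + 2) t).mul_left _
  set S2' : ℕ → ℝ := fun m => Nat.rec 0 (fun k _ => t / 2 * A (n + 2) k t) m with hS2'
  have h2' : HasSum S2' (t / 2 * besselJ (n + 2) t) := by
    have h0 : S2' 0 = 0 := rfl
    simpa [h0] using (hasSum_nat_add_iff (f := S2') 1).mp h2
  have h3 : HasSum (fun m => t / 2 * A n m t + S2' m)
      (t / 2 * (besselJ n t + besselJ (n + 2) t)) := by
    rw [mul_add]; exact h1.add h2'
  have key : ∀ m, t / 2 * A n m t + S2' m = ((n : ℝ) + 1) * A (n + 1) m t := by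
    intro m
    have hfac : ∀ k : ℕ, ((Nat.factorial k : ℝ)) ≠ 0 := fun k => by
      exact_mod_cast (Nat.factorial_pos k).ne'
    cases m with
    | zero =>
        show t / 2 * A n 0 t + 0 = ((n : ℝ) + 1) * A (n + 1) 0 t
        simp only [A, Nat.mul_zero, Nat.add_zero, pow_zero, one_mul, Nat.factorial_zero,
          Nat.cast_one, pow_succ]
        rw [Nat.factorial_succ]
        push_cast
        field_simp
        ring
    | succ k =>
        show t / 2 * A n (k + 1) t + t / 2 * A (n + 2) k t = ((n : ℝ) + 1) * A (n + 1) (k + 1) t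
        simp only [A]
        have e1 : n + 2 * (k + 1) = n + 2 + 2 * k := by ring
        have e2 : n + 1 + 2 * (k + 1) = (n + 2 + 2 * k) + 1 := by ring
        have e3 : n + (k + 1) = (n + k) + 1 := by ring
        have e4 : n + 1 + (k + 1) = ((n + k) + 1) + 1 := by ring
        have e5 : n + 2 + k = ((n + k) + 1) + 1 := by ring
        rw [e1, e2, e3, e4, e5]
        simp only [Nat.factorial_succ]
        push_cast
        field_simp
        ring
  simp only [key] at h3
  exact h3.unique ((hasSum_A (n + 1) t).mul_left _)


/-- Summand for the generating-function expansion. -/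
noncomputable def cc (t : ℝ) (p : ℕ × ℕ) : ℂ :=
  (((t : ℂ) / 2) ^ p.1 / (Nat.factorial p.1 : ℂ)) *
    ((-(t : ℂ) / 2) ^ p.2 / (Nat.factorial p.2 : ℂ))

lemma summable_norm_cc (t : ℝ) : Summable fun p => ‖cc t p‖ := by
  have h1 : Summable fun a : ℕ => ‖((t : ℂ) / 2) ^ a / (Nat.factorial a : ℂ)‖ := by
    simpa using NormedSpace.norm_expSeries_div_summable ((t : ℂ) / 2)
  have h2 : Summable fun a : ℕ => ‖(-(t : ℂ) / 2) ^ a / (Nat.factorial a : ℂ)‖ := by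
    simpa using NormedSpace.norm_expSeries_div_summable (-(t : ℂ) / 2)
  have := h1.mul_norm h2
  simpa [cc, norm_mul] using this

lemma summable_cc (t : ℝ) : Summable (cc t) := (summable_norm_cc t).of_norm

/-- `eC t m` is the coefficient of `z^m` in `exp((t/2)(z - 1/z))`. -/
noncomputable def eC (t : ℝ) (m : ℤ) : ℂ :=
  ∑' p : ℕ × ℕ, if (p.1 : ℤ) - (p.2 : ℤ) = m then cc t p else 0

lemma eC_natCast (t : ℝ) (n : ℕ) : eC t (n : ℤ) = (besselJ n t : ℂ) := by
  rw [eC]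
  have hg : Function.Injective (fun b : ℕ => ((b + n : ℕ), b)) := by
    intro a b h
    simpa using congr_arg Prod.snd h
  rw [← hg.tsum_eq ?_]
  · rw [besselJ_eq, Complex.ofReal_tsum]
    apply tsum_congr
    intro b
    have hb : ((b + n : ℕ) : ℤ) - (b : ℤ) = (n : ℤ) := by push_cast; ring
    simp only [hb, if_true, cc]
    rw [A]
    push_cast
    have e1 : b + n = n + b := by ring
    have e2 : n + 2 * b = (n + b) + b := by ring
    rw [neg_div, neg_pow, e1, e2, pow_add]
    field_simp
    ring
  · intro p hp
    simp only [Function.mem_support, ne_eq, ite_eq_right_iff, not_forall] at hp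
    obtain ⟨hd, -⟩ := hp
    refine Set.mem_range.2 ⟨p.2, ?_⟩
    have : p.1 = p.2 + n := by omega
    simp [Prod.ext_iff, this]

lemma eC_neg_natCast (t : ℝ) (n : ℕ) : eC t (-(n : ℤ)) = (-1 : ℂ) ^ n * eC t (n : ℤ) := by
  rw [eC, eC, ← (Equiv.prodComm ℕ ℕ).tsum_eq, ← tsum_mul_left]
  apply tsum_congr
  intro p
  simp only [Equiv.prodComm_apply, Prod.swap]
  obtain ⟨a, b⟩ := p
  by_cases h : (a : ℤ) - (b : ℤ) = (n : ℤ)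
  · have h' : (b : ℤ) - (a : ℤ) = -(n : ℤ) := by omega
    simp only [h', h, ↓reduceIte]
    show cc t (b, a) = _
    have hp1 : a = b + n := by omega
    simp only [cc]
    subst hp1
    have key : ∀ k : ℕ, (-(t : ℂ) / 2) ^ k = (-1 : ℂ) ^ k * ((t : ℂ) / 2) ^ k := fun k => by
      rw [neg_div, neg_pow]
    rw [key, key, pow_add]
    ring
  · have h' : ¬ ((b : ℤ) - (a : ℤ) = -(n : ℤ)) := by omega
    simp only [h', h, ↓reduceIte, mul_zero]


section Fourier

open AddCircle

instance fact_two_pi : Fact (0 < 2 * π) := ⟨by positivity⟩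

/-- The continuous linear functional computing the `n`-th Fourier coefficient. -/
noncomputable def L (n : ℤ) : C(AddCircle (2 * π), ℂ) →L[ℂ] ℂ :=
  (innerSL ℂ (fourierLp 2 n)).comp (ContinuousMap.toLp 2 haarAddCircle ℂ)

lemma L_apply (n : ℤ) (h : C(AddCircle (2 * π), ℂ)) : L n h = fourierCoeff (⇑h) n := by
  have h1 := fourierCoeff_toLp h n
  have h2 := fourierBasis_repr (ContinuousMap.toLp (E := ℂ) 2 haarAddCircle ℂ h) n
  have h3 := fourierBasis.repr_apply_apply (ContinuousMap.toLp (E := ℂ) 2 haarAddCircle ℂ h) n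
  rw [coe_fourierBasis] at h3
  rw [← h1, ← h2, h3]
  rfl

lemma fourierCoeff_fourier' (m n : ℤ) :
    fourierCoeff (⇑(fourier m : C(AddCircle (2 * π), ℂ))) n = if n = m then 1 else 0 := by
  rw [← L_apply]
  exact orthonormal_iff_ite.mp orthonormal_fourier n m

/-- The summand continuous maps. -/
noncomputable def gfun (t : ℝ) (p : ℕ × ℕ) : C(AddCircle (2 * π), ℂ) :=
  ((t : ℂ) / 2 * cc t p) • (fourier ((p.1 : ℤ) - p.2 + 1) + fourier ((p.1 : ℤ) - p.2 - 1))

lemma summable_gfun (t : ℝ) : Summable (gfun t) := by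
  apply Summable.of_norm_bounded (g := fun p => ‖(t : ℂ) / 2‖ * ‖cc t p‖ * 2)
    (((summable_norm_cc t).mul_left _).mul_right _)
  intro p
  calc ‖gfun t p‖ = ‖(t : ℂ) / 2‖ * ‖cc t p‖ *
        ‖fourier ((p.1 : ℤ) - p.2 + 1) + fourier ((p.1 : ℤ) - p.2 - 1)‖ := by
        rw [gfun, norm_smul, norm_mul, mul_assoc]
    _ ≤ ‖(t : ℂ) / 2‖ * ‖cc t p‖ *
        (‖(fourier ((p.1 : ℤ) - p.2 + 1) : C(AddCircle (2 * π), ℂ))‖ +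
          ‖(fourier ((p.1 : ℤ) - p.2 - 1) : C(AddCircle (2 * π), ℂ))‖) := by
        gcongr
        exact norm_add_le _ _
    _ = ‖(t : ℂ) / 2‖ * ‖cc t p‖ * 2 := by rw [fourier_norm, fourier_norm]; norm_num

/-- The function `θ ↦ t cos θ e^{i t sin θ}` as a sum of Fourier monomials. -/
noncomputable def ff (t : ℝ) : C(AddCircle (2 * π), ℂ) := ∑' p, gfun t p

lemma summable_ind (t : ℝ) (m : ℤ) :
    Summable fun p : ℕ × ℕ => if (p.1 : ℤ) - (p.2 : ℤ) = m then cc t p else 0 := by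
  apply Summable.of_norm_bounded (g := fun p => ‖cc t p‖) (summable_norm_cc t)
  intro p
  split_ifs
  · exact le_rfl
  · simp [norm_nonneg]

lemma fourierCoeff_ff (t : ℝ) (n : ℤ) :
    fourierCoeff (⇑(ff t)) n = (t : ℂ) / 2 * (eC t (n - 1) + eC t (n + 1)) := by
  rw [← L_apply, ff, ContinuousLinearMap.map_tsum _ (summable_gfun t)]
  have hterm : ∀ p : ℕ × ℕ, L n (gfun t p) =
      (t : ℂ) / 2 * ((if (p.1 : ℤ) - p.2 = n - 1 then cc t p else 0) +
        (if (p.1 : ℤ) - p.2 = n + 1 then cc t p else 0)) := by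
    intro p
    rw [gfun, _root_.map_smul, map_add, L_apply, L_apply, fourierCoeff_fourier', fourierCoeff_fourier']
    have h1 : (n = (p.1 : ℤ) - p.2 + 1) ↔ ((p.1 : ℤ) - p.2 = n - 1) := by omega
    have h2 : (n = (p.1 : ℤ) - p.2 - 1) ↔ ((p.1 : ℤ) - p.2 = n + 1) := by omega
    simp only [smul_eq_mul, h1, h2]
    split_ifs <;> ring
  rw [tsum_congr hterm, tsum_mul_left,
    Summable.tsum_add (summable_ind t (n - 1)) (summable_ind t (n + 1))]
  rfl

lemma fourier_eval (m : ℤ) (θ : ℝ) :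
    (fourier m : C(AddCircle (2 * π), ℂ)) (θ : AddCircle (2 * π)) =
      Complex.exp ((m : ℂ) * θ * Complex.I) := by
  rw [fourier_coe_apply]
  congr 1
  have hπ : (π : ℂ) ≠ 0 := Complex.ofReal_ne_zero.mpr Real.pi_ne_zero
  push_cast
  field_simp

lemma ff_apply (t θ : ℝ) :
    ff t (θ : AddCircle (2 * π)) =
      ((t * Real.cos θ : ℝ) : ℂ) * Complex.exp (((t * Real.sin θ : ℝ) : ℂ) * Complex.I) := by
  set z : ℂ := Complex.exp ((θ : ℂ) * Complex.I) with hzdef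
  set w : ℂ := Complex.exp (-(θ : ℂ) * Complex.I) with hwdef
  have hev : ff t (θ : AddCircle (2 * π)) = ∑' p, gfun t p (θ : AddCircle (2 * π)) := by
    rw [ff]
    exact (ContinuousMap.evalCLM ℂ ((θ : ℝ) : AddCircle (2 * π))).map_tsum (summable_gfun t)
  have hzp : ∀ a : ℕ, z ^ a = Complex.exp ((a : ℂ) * θ * Complex.I) := by
    intro a
    rw [hzdef, ← Complex.exp_nat_mul]
    ring_nf
  have hwp : ∀ b : ℕ, w ^ b = Complex.exp (-(b : ℂ) * θ * Complex.I) := by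
    intro b
    rw [hwdef, ← Complex.exp_nat_mul]
    ring_nf
  have hterm : ∀ p : ℕ × ℕ, gfun t p (θ : AddCircle (2 * π)) =
      ((((t : ℂ) / 2 * z) ^ p.1 / (Nat.factorial p.1 : ℂ)) *
        ((-(t : ℂ) / 2 * w) ^ p.2 / (Nat.factorial p.2 : ℂ))) * ((t : ℂ) / 2 * (z + w)) := by
    intro p
    rw [gfun]
    simp only [ContinuousMap.smul_apply, ContinuousMap.add_apply, smul_eq_mul]
    rw [fourier_eval, fourier_eval, cc]
    have e1 : Complex.exp ((((p.1 : ℤ) - p.2 + 1 : ℤ) : ℂ) * θ * Complex.I) =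
        z ^ p.1 * w ^ p.2 * z := by
      rw [hzp, hwp, hzdef, ← Complex.exp_add, ← Complex.exp_add]
      push_cast
      ring_nf
    have e2 : Complex.exp ((((p.1 : ℤ) - p.2 - 1 : ℤ) : ℂ) * θ * Complex.I) =
        z ^ p.1 * w ^ p.2 * w := by
      rw [hzp, hwp, hwdef, ← Complex.exp_add, ← Complex.exp_add]
      push_cast
      ring_nf
    rw [e1, e2, mul_pow, mul_pow]
    ring
  have hsum : ∑' p : ℕ × ℕ, ((((t : ℂ) / 2 * z) ^ p.1 / (Nat.factorial p.1 : ℂ)) *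
        ((-(t : ℂ) / 2 * w) ^ p.2 / (Nat.factorial p.2 : ℂ))) =
      Complex.exp ((t : ℂ) / 2 * z) * Complex.exp (-(t : ℂ) / 2 * w) := by
    rw [cexp_tsum, cexp_tsum]
    exact (tsum_mul_tsum_of_summable_norm
      (NormedSpace.norm_expSeries_div_summable ((t : ℂ) / 2 * z))
      (NormedSpace.norm_expSeries_div_summable (-(t : ℂ) / 2 * w))).symm
  have hz : z = Complex.cos θ + Complex.sin θ * Complex.I := by
    rw [hzdef, Complex.exp_mul_I]
  have hw : w = Complex.cos θ - Complex.sin θ * Complex.I := by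
    rw [hwdef, Complex.exp_mul_I, Complex.cos_neg, Complex.sin_neg]
    ring
  rw [hev, tsum_congr hterm, tsum_mul_right, hsum, ← Complex.exp_add, mul_comm]
  congr 1
  · rw [hz, hw, Complex.ofReal_mul, Complex.ofReal_cos]
    ring
  · congr 1
    rw [hz, hw, Complex.ofReal_mul, Complex.ofReal_sin]
    ring

lemma norm_ff_sq (t θ : ℝ) :
    ‖ff t (θ : AddCircle (2 * π))‖ ^ 2 = (t * Real.cos θ) ^ 2 := by
  rw [ff_apply, norm_mul, Complex.norm_real, Complex.norm_exp_ofReal_mul_I]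
  rw [mul_one, Real.norm_eq_abs, _root_.sq_abs]

lemma integral_normsq_ff (t : ℝ) :
    ∫ x : AddCircle (2 * π), ‖ff t x‖ ^ 2 ∂haarAddCircle = t ^ 2 / 2 := by
  have h0 : ∫ x : AddCircle (2 * π), ‖ff t x‖ ^ 2 ∂volume
      = ∫ θ in (0:ℝ)..0 + 2 * π, ‖ff t (θ : AddCircle (2 * π))‖ ^ 2 :=
    (AddCircle.intervalIntegral_preimage (2 * π) 0 (fun x => ‖ff t x‖ ^ 2)).symm
  have h1 : ∫ θ in (0:ℝ)..0 + 2 * π, ‖ff t (θ : AddCircle (2 * π))‖ ^ 2 = t ^ 2 * π := by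
    rw [intervalIntegral.integral_congr (g := fun θ => t ^ 2 * Real.cos θ ^ 2)
      (fun θ _ => by rw [norm_ff_sq]; ring)]
    rw [intervalIntegral.integral_const_mul, integral_cos_sq]
    rw [zero_add]
    rw [Real.sin_two_pi, Real.cos_two_pi, Real.sin_zero, Real.cos_zero]
    ring
  set X := ∫ x : AddCircle (2 * π), ‖ff t x‖ ^ 2 ∂haarAddCircle with hX
  have h2 : t ^ 2 * π = (2 * π) * X := by
    rw [hX, ← h1, ← h0, volume_eq_smul_haarAddCircle, MeasureTheory.integral_smul_measure,
      ENNReal.toReal_ofReal (by positivity : (0:ℝ) ≤ 2 * π), smul_eq_mul]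
  have h6 : (2 * π) * X = (2 * π) * (t ^ 2 / 2) := by rw [← h2]; ring
  exact mul_left_cancel₀ (by positivity) h6

lemma parseval_ff (t : ℝ) :
    ∑' n : ℤ, ‖fourierCoeff (⇑(ff t)) n‖ ^ 2 = t ^ 2 / 2 := by
  have h := tsum_sq_fourierCoeff (ContinuousMap.toLp (E := ℂ) 2 haarAddCircle ℂ (ff t))
  simp_rw [fourierCoeff_toLp] at h
  rw [h, ← integral_normsq_ff t]
  apply MeasureTheory.integral_congr_ae
  filter_upwards [ContinuousMap.coeFn_toLp (p := 2) (μ := haarAddCircle) (𝕜 := ℂ) (ff t)]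
    with x hx
  rw [hx]

lemma normsq_coeff (t : ℝ) (n : ℤ) :
    ‖fourierCoeff (⇑(ff t)) n‖ ^ 2 = (n : ℝ) ^ 2 * besselJ n.natAbs t ^ 2 := by
  rw [fourierCoeff_ff]
  match n with
  | Int.ofNat 0 =>
      have h1 : ((Int.ofNat 0) - 1 : ℤ) = -((1 : ℕ) : ℤ) := by decide
      have h2 : ((Int.ofNat 0) + 1 : ℤ) = ((1 : ℕ) : ℤ) := by decide
      rw [h1, h2, eC_neg_natCast, eC_natCast]
      simp
  | Int.ofNat (k+1) =>
      have h1 : ((Int.ofNat (k+1)) - 1 : ℤ) = ((k : ℕ) : ℤ) := by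
        simp only [Int.ofNat_eq_coe]; push_cast; ring
      have h2 : ((Int.ofNat (k+1)) + 1 : ℤ) = ((k + 2 : ℕ) : ℤ) := by
        simp only [Int.ofNat_eq_coe]; push_cast; ring
      rw [h1, h2, eC_natCast, eC_natCast]
      have h3 : (t : ℂ) / 2 * ((besselJ k t : ℂ) + (besselJ (k+2) t : ℂ))
          = ((t / 2 * (besselJ k t + besselJ (k+2) t) : ℝ) : ℂ) := by push_cast; ring
      rw [h3, bessel_rec k t, Complex.norm_real, Real.norm_eq_abs, _root_.sq_abs]
      have h4 : (Int.ofNat (k+1)).natAbs = k + 1 := rfl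
      rw [h4]
      simp only [Int.ofNat_eq_coe]
      push_cast
      ring
  | Int.negSucc k =>
      have h1 : ((Int.negSucc k) - 1 : ℤ) = -((k + 2 : ℕ) : ℤ) := by
        rw [Int.negSucc_eq]; push_cast; ring
      have h2 : ((Int.negSucc k) + 1 : ℤ) = -((k : ℕ) : ℤ) := by
        rw [Int.negSucc_eq]; ring
      rw [h1, h2, eC_neg_natCast, eC_neg_natCast, eC_natCast, eC_natCast]
      have h3 : (t : ℂ) / 2 * ((-1 : ℂ) ^ (k + 2) * (besselJ (k+2) t : ℂ)
            + (-1 : ℂ) ^ k * (besselJ k t : ℂ))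
          = (-1 : ℂ) ^ k * ((t / 2 * (besselJ k t + besselJ (k+2) t) : ℝ) : ℂ) := by
        rw [pow_add]
        push_cast
        ring
      rw [h3, bessel_rec k t, norm_mul, norm_pow, norm_neg, norm_one, one_pow, one_mul,
        Complex.norm_real, Real.norm_eq_abs, _root_.sq_abs]
      have h4 : (Int.negSucc k).natAbs = k + 1 := rfl
      rw [h4, Int.cast_negSucc]
      push_cast
      ring

end Fourier

end BesselAux

theorem bessel_sum_sq_weighted (t : ℝ) :
    ∑' n : ℕ, (n : ℝ) ^ 2 * (besselJ n t) ^ 2 = t ^ 2 / 4 := by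
  classical
  by_cases ht : t = 0
  · subst ht
    have hz : ∀ n : ℕ, (n : ℝ) ^ 2 * besselJ n 0 ^ 2 = 0 := by
      intro n
      rcases Nat.eq_zero_or_pos n with h | h
      · simp [h]
      · have hJ : besselJ n 0 = 0 := by
          rw [BesselAux.besselJ_eq]
          convert tsum_zero with m
          have : n + 2 * m ≠ 0 := by omega
          simp [BesselAux.A, this, h.ne']
        simp [hJ]
    rw [tsum_congr hz, tsum_zero]
    norm_num
  · have hpar := BesselAux.parseval_ff t
    set Sz : ℤ → ℝ := fun n => ‖fourierCoeff (⇑(BesselAux.ff t)) n‖ ^ 2 with hSz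
    have hsum : Summable Sz := by
      by_contra hc
      rw [tsum_eq_zero_of_not_summable hc] at hpar
      have ht2 : t ^ 2 = 0 := by linarith
      exact ht (by nlinarith)
    have h1 : Summable fun n : ℕ => Sz (n : ℤ) :=
      hsum.comp_injective (fun a b hab => by exact_mod_cast hab)
    have h2 : Summable fun n : ℕ => Sz (-((n : ℤ) + 1)) :=
      hsum.comp_injective (fun a b hab => by omega)
    rw [tsum_of_nat_of_neg_add_one h1 h2] at hpar
    have e1 : ∀ n : ℕ, Sz (n : ℤ) = (n : ℝ) ^ 2 * besselJ n t ^ 2 := fun n => by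
      rw [hSz]
      have := BesselAux.normsq_coeff t (n : ℤ)
      simpa using this
    have e2 : ∀ n : ℕ, Sz (-((n : ℤ) + 1)) = ((n : ℝ) + 1) ^ 2 * besselJ (n + 1) t ^ 2 :=
      fun n => by
      have := BesselAux.normsq_coeff t (-((n : ℤ) + 1))
      have hna : (-((n : ℤ) + 1)).natAbs = n + 1 := by omega
      rw [hna] at this
      exact this.trans (by push_cast; ring)
    have h3 : Summable fun n : ℕ => (n : ℝ) ^ 2 * besselJ n t ^ 2 := h1.congr e1
    have h4 : ∑' n : ℕ, (n : ℝ) ^ 2 * besselJ n t ^ 2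
        = ∑' n : ℕ, ((n : ℝ) + 1) ^ 2 * besselJ (n + 1) t ^ 2 := by
      rw [Summable.tsum_eq_zero_add h3]
      push_cast
      simp
    rw [tsum_congr e1, tsum_congr e2, ← h4] at hpar
    linarith
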